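/- The fixed-point locus of every nontrivial element of O_F^× ⋉ O_F acting on ℂ^{s+t} is contained in ℝ^s × ℂ^t: if (u, a) ∈ O_F^× × O_F with (u, a) ≠ (1, 0) and z ∈ ℂ^{s+t} satisfies σ_i(u)z_i + σ_i(a) = z_i for every i = 1, …, s+t, then u ≠ 1 and the coordinates z_1, …, z_s are real numbers. -/
import Mathlib


open scoped NumberField

/-- The fixed-point locus of every nontrivial element of `O_F^× ⋉ O_F` acting on
`ℂ^(s+t)` is contained in `ℝ^s × ℂ^t`: if `(u, a) ≠ (1, 0)` and `z` satisfies
`σ i (u) * z i + σ i (a) = z i` for every `i`, then `u ≠ 1` and `z 1, …, z s` are real. -/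
theorem ot_fixed_points_real
    (F : Type) [Field F] [NumberField F] (s t : ℕ)
    (hs : 0 < s) (ht : 0 < t)
    (hdeg : Module.finrank ℚ F = s + 2 * t)
    (σ : Fin (s + t) → (F →+* ℂ))
    (hreal : ∀ i : Fin (s + t), (i : ℕ) < s → ∀ x : F, (σ i x).im = 0)
    (hcplx : ∀ i : Fin (s + t), s ≤ (i : ℕ) → ∃ x : F, (σ i x).im ≠ 0)
    (hdist : Function.Injective σ)
    (hpair : ∀ i j : Fin (s + t), (starRingEnd ℂ).comp (σ i) = σ j → (i : ℕ) < s)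
    (hall : ∀ ψ : F →+* ℂ, ∃ i : Fin (s + t), ψ = σ i ∨ ψ = (starRingEnd ℂ).comp (σ i))
    (u : (𝓞 F)ˣ) (a : 𝓞 F) (hua : (u, a) ≠ ((1 : (𝓞 F)ˣ), (0 : 𝓞 F)))
    (z : Fin (s + t) → ℂ)
    (hz : ∀ i : Fin (s + t),
      σ i (algebraMap (𝓞 F) F (u : 𝓞 F)) * z i + σ i (algebraMap (𝓞 F) F a) = z i) :
    u ≠ 1 ∧ ∀ i : Fin (s + t), (i : ℕ) < s → (z i).im = 0 := by

  have hainj : Function.Injective (algebraMap (𝓞 F) F) :=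
    NumberField.RingOfIntegers.coe_injective
  have hu : u ≠ 1 := by
    intro h
    apply hua
    subst h
    have i0 : Fin (s + t) := ⟨0, by omega⟩
    have h0 := hz i0
    simp only [Units.val_one, map_one, one_mul, add_eq_left] at h0
    have ha : a = 0 := by simpa using h0
    simp [ha]
  refine ⟨hu, fun i hi => ?_⟩
  have hA : (σ i (algebraMap (𝓞 F) F (u : 𝓞 F))).im = 0 := hreal i hi _
  have hB : (σ i (algebraMap (𝓞 F) F a)).im = 0 := hreal i hi _
  have hAne : σ i (algebraMap (𝓞 F) F (u : 𝓞 F)) ≠ 1 := by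
    intro h
    apply hu
    have h1 : algebraMap (𝓞 F) F (u : 𝓞 F) = 1 := (σ i).injective (by simpa using h)
    have : (u : 𝓞 F) = 1 := hainj (by simpa using h1)
    exact Units.ext this
  have him := congrArg Complex.im (hz i)
  simp only [Complex.add_im, Complex.mul_im, hA, hB, zero_mul, mul_zero, add_zero] at him
  have hre : (σ i (algebraMap (𝓞 F) F (u : 𝓞 F))).re ≠ 1 := by
    intro h
    exact hAne (Complex.ext h hA)
  have : (z i).im * ((σ i (algebraMap (𝓞 F) F (u : 𝓞 F))).re - 1) = 0 := by
    rw [mul_sub]; linarith [him]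
  rcases mul_eq_zero.mp this with h | h
  · exact h
  · exact absurd (by linarith : (σ i (algebraMap (𝓞 F) F (u : 𝓞 F))).re = 1) hre
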